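/- If R : X ↔ 𝒫Y is inner deterministic and S : Y ↔ 𝒫Z, T : Z ↔ 𝒫W are arbitrary multirelations, then Peleg composition associates: R ∗ (S ∗ T) = (R ∗ S) ∗ T. -/
import Mathlib


universe u v w x

variable {X : Type u} {Y : Type v} {Z : Type w} {W : Type x}

/-- Relational composition. -/
def rcomp (R : Set (X × Y)) (S : Set (Y × Z)) : Set (X × Z) :=
  {p | ∃ b, (p.1, b) ∈ R ∧ (b, p.2) ∈ S}

/-- Power transpose Λ. -/
def Lam (R : Set (X × Y)) : Set (X × Set Y) :=
  {p | p.2 = {b | (p.1, b) ∈ R}}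

/-- α : postcomposition with the has-element relation. -/
def alphaM (S : Set (X × Set Y)) : Set (X × Y) :=
  {p | ∃ B, (p.1, B) ∈ S ∧ p.2 ∈ B}

/-- η : singleton embedding. -/
def etaM (R : Set (X × Y)) : Set (X × Set Y) :=
  {p | ∃ b, (p.1, b) ∈ R ∧ p.2 = {b}}

/-- Peleg composition. -/
def peleg (R : Set (X × Set Y)) (S : Set (Y × Set Z)) : Set (X × Set Z) :=
  {p | ∃ B, (p.1, B) ∈ R ∧ ∃ f : Y → Set Z, (∀ b ∈ B, (b, f b) ∈ S) ∧ p.2 = ⋃ b ∈ B, f b}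

/-- Outer deterministic: each element relates to exactly one set. -/
def OuterDet (R : Set (X × Set Y)) : Prop := ∀ a, ∃! B, (a, B) ∈ R

/-- Inner deterministic: every related set is a singleton. -/
def InnerDet (R : Set (X × Set Y)) : Prop := ∀ a B, (a, B) ∈ R → ∃ b, B = {b}

/-- Inner univalent: every related set is empty or a singleton. -/
def InnerUniv (R : Set (X × Set Y)) : Prop := ∀ a B, (a, B) ∈ R → B = ∅ ∨ ∃ b, B = {b}

/-- The unit 1_X. -/
def oneM (X : Type u) : Set (X × Set X) := {p | p.2 = {p.1}}

/-- Identity relation. -/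
def idR (X : Type u) : Set (X × X) := {p | p.1 = p.2}

/-- Hoare preorder ⊑↓. -/
def hle (R S : Set (X × Set Y)) : Prop := ∀ a A, (a, A) ∈ R → ∃ B, (a, B) ∈ S ∧ A ⊆ B

/-- Smyth preorder ⊑↑. -/
def sle (P Q : Set (X × Set Y)) : Prop := ∀ a B, (a, B) ∈ Q → ∃ A, (a, A) ∈ P ∧ A ⊆ B

/-- Down-closure. -/
def downCl (R : Set (X × Set Y)) : Set (X × Set Y) := {p | ∃ B, (p.1, B) ∈ R ∧ p.2 ⊆ B}

/-- Atoms: pairs whose second component is a singleton. -/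
def atomsM (X : Type u) (Y : Type v) : Set (X × Set Y) := {p | ∃ b, p.2 = {b}}

/-- Terminal part τ(R). -/
def tauM (R : Set (X × Set Y)) : Set (X × Set Y) := {p ∈ R | p.2 = ∅}

/-- Terminal part of R viewed as a multirelation into any other powerset. -/
def tauAs (R : Set (X × Set Y)) : Set (X × Set Z) := {p | (p.1, (∅ : Set Y)) ∈ R ∧ p.2 = ∅}

/-- Outer determinisation (fusion). -/
def deltaO (R : Set (X × Set Y)) : Set (X × Set Y) := Lam (alphaM R)

/-- Inner determinisation (fission). -/
def deltaI (R : Set (X × Set Y)) : Set (X × Set Y) := etaM (alphaM R)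

lemma peleg_innerdet {R : Set (X × Set Y)} (hR : InnerDet R) (Q : Set (Y × Set Z))
    (a : X) (C : Set Z) :
    (a, C) ∈ peleg R Q ↔ ∃ b, (a, ({b} : Set Y)) ∈ R ∧ (b, C) ∈ Q := by
  constructor
  · rintro ⟨B, hB, f, hf, rfl⟩
    obtain ⟨b, rfl⟩ := hR a B hB
    refine ⟨b, hB, ?_⟩
    have : (⋃ x ∈ ({b} : Set Y), f x) = f b := by simp
    rw [this]
    exact hf b rfl
  · rintro ⟨b, hb, hQ⟩
    refine ⟨{b}, hb, fun _ => C, ?_, by simp⟩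
    rintro x rfl
    exact hQ

theorem stmt5 (R : Set (X × Set Y)) (S : Set (Y × Set Z)) (T : Set (Z × Set W))
    (hR : InnerDet R) :
    peleg R (peleg S T) = peleg (peleg R S) T := by
  ext ⟨a, D⟩
  show (a, D) ∈ peleg R (peleg S T) ↔ (a, D) ∈ peleg (peleg R S) T
  rw [peleg_innerdet hR _ a D]
  constructor
  · rintro ⟨b, hb, B, hB, g, hg, rfl⟩
    exact ⟨B, ⟨{b}, hb, fun _ => B, by rintro x rfl; exact hB, by simp⟩, g, hg, rfl⟩
  · rintro ⟨B, hBS, g, hg, rfl⟩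
    obtain ⟨b, hb, hB⟩ := (peleg_innerdet hR S a B).mp hBS
    exact ⟨b, hb, B, hB, g, hg, rfl⟩
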